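/- arXiv:1306.6562 — 2 statements merged into one kernel-verified Lean document; each statement's English description precedes it below -/
import Mathlib

section
/- The coheir relation satisfies transitivity: if A ⫝_{M0'} N and M0' ⫝_{M0} N with M0 ≺ M0' ≺ N, then A ⫝_{M0} N. -/
universe u

open Cardinal

/-- An abstract elementary class presented inside a monster model `C`, with
amalgamation, joint embedding and no maximal models (so that a monster model
exists).  Models are certain subsets of `C`, `prec` is the `≺_K` relation, and
`Aut` is the automorphism group of the monster model. -/
structure AEC (C : Type u) where
  IsModel : Set C → Prop
  prec : Set C → Set C → Prop
  Aut : Subgroup (Equiv.Perm C)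
  LS : Cardinal.{u}
  prec_refl : ∀ {M : Set C}, IsModel M → prec M M
  prec_trans : ∀ {M N P : Set C}, prec M N → prec N P → prec M P
  prec_isModel_left : ∀ {M N : Set C}, prec M N → IsModel M
  prec_isModel_right : ∀ {M N : Set C}, prec M N → IsModel N
  prec_subset : ∀ {M N : Set C}, prec M N → M ⊆ N
  coherence : ∀ {M N P : Set C}, prec M P → prec N P → M ⊆ N → prec M N
  aut_prec : ∀ f ∈ Aut, ∀ {M N : Set C}, prec M N → prec (f '' M) (f '' N)
  lowenheimSkolem : ∀ {N : Set C} (A : Set C), IsModel N → A ⊆ N →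
    ∃ N' : Set C, prec N' N ∧ A ⊆ N' ∧ #N' ≤ #A + LS
  unionChain : ∀ {ι : Type u} [inst : LinearOrder ι] (M : ι → Set C),
    (∀ i j, i ≤ j → prec (M i) (M j)) →
    ∀ N : Set C, (∀ i, prec (M i) N) → prec (⋃ j, M j) N

namespace AEC

variable {C : Type u} (K : AEC C)

/-- `f` fixes the set `M` pointwise. -/
def fixes (f : Equiv.Perm C) (M : Set C) : Prop := ∀ x ∈ M, f x = x

/-- Equality of Galois types over `M` of two `ι`-indexed tuples: some
automorphism of the monster model fixing `M` pointwise maps one to the other. -/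
def tpEq {ι : Type u} (a b : ι → C) (M : Set C) : Prop :=
  ∃ f ∈ K.Aut, fixes f M ∧ ∀ i, f (a i) = b i

/-- Coheir non-forking: `A ⫝_{M0} N` iff `M0 ≺ N` and for every subset `a ⊆ A`
of size `< κ` and every `N⁻ ≺ N` of size `< κ`, the Galois type of `a` over
`N⁻` is realized in `M0` (witnessed by an automorphism fixing `N⁻` that moves
`a` into `M0`). -/
def NF (κ : Cardinal.{u}) (A M0 N : Set C) : Prop :=
  K.prec M0 N ∧
  ∀ a : Set C, a ⊆ A → #a < κ →
  ∀ N' : Set C, K.prec N' N → #N' < κ →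
  ∃ f ∈ K.Aut, fixes f N' ∧ ∀ x ∈ a, f x ∈ M0


/-- Transitivity of coheir non-forking. -/
theorem nf_transitivity (κ : Cardinal.{u}) (A M0 M0' N : Set C)
    (h1 : K.NF κ A M0' N) (h2 : K.NF κ M0' M0 N) (hM : K.prec M0 M0') :
    K.NF κ A M0 N := by
  obtain ⟨hp1, h1⟩ := h1
  obtain ⟨hp2, h2⟩ := h2
  refine ⟨hp2, ?_⟩
  intro a ha hca N' hN' hcN'
  obtain ⟨f, hf, hfix, hfa⟩ := h1 a ha hca N' hN' hcN'
  obtain ⟨g, hg, hgfix, hga⟩ := h2 (f '' a) (by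
      rintro _ ⟨x, hx, rfl⟩; exact hfa x hx)
    (lt_of_le_of_lt (Cardinal.mk_image_le) hca) N' hN' hcN'
  refine ⟨g * f, mul_mem hg hf, ?_, ?_⟩
  · intro x hx
    show g (f x) = x
    rw [hfix x hx, hgfix x hx]
  · intro x hx
    exact hga (f x) ⟨x, hx, rfl⟩

end AEC
end

section
/- The coheir relation satisfies continuity: if ⟨A_i, M0^i : i < kappa⟩ are increasing continuous filtrations of A and M0 respectively, and A_i ⫝_{M0^i} N for all i < kappa, then A ⫝_{M0} N. -/
universe u

open Cardinal

namespace AEC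

variable {C : Type u} (K : AEC C)

/-- Any family of fewer than `κ` elements of `κ.ord.ToType` is bounded,
for `κ` regular. -/
theorem bounded_of_small {κ : Cardinal.{u}} (hreg : κ.IsRegular)
    {ι : Type u} (hι : #ι < κ) (g : ι → κ.ord.ToType) :
    ∃ j : κ.ord.ToType, ∀ i, g i ≤ j := by
  set e := (@Ordinal.ToType.mk κ.ord)
  set f : ι → Ordinal := fun i => (e.symm (g i)).1
  have hf : ∀ i, f i < κ.ord := fun i => (e.symm (g i)).2
  have hsup : iSup f < κ.ord := Cardinal.iSup_lt_ord_of_isRegular hreg hι hf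
  refine ⟨e ⟨iSup f, hsup⟩, fun i => ?_⟩
  have : e.symm (g i) ≤ ⟨iSup f, hsup⟩ := Ordinal.le_iSup f i
  simpa using (e.symm.le_iff_le).mp (by simpa using this)

/-- Continuity of coheir non-forking: if `⟨A_i, M0^i : i < κ⟩`
are increasing continuous filtrations of `A` and `M0` and `A_i ⫝_{M0^i} N` for
all `i < κ`, then `A ⫝_{M0} N`. -/
theorem nf_continuity (κ : Cardinal.{u}) (hreg : κ.IsRegular) (hκ : K.LS < κ)
    (N : Set C) (Ai M0i : κ.ord.ToType → Set C)
    (hAmono : ∀ i j, i ≤ j → Ai i ⊆ Ai j)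
    (hMmono : ∀ i j, i ≤ j → K.prec (M0i i) (M0i j))
    (hAcont : ∀ i : κ.ord.ToType, (∀ j < i, ∃ j', j < j' ∧ j' < i) →
      Ai i = ⋃ j ∈ Set.Iio i, Ai j)
    (hMcont : ∀ i : κ.ord.ToType, (∀ j < i, ∃ j', j < j' ∧ j' < i) →
      M0i i = ⋃ j ∈ Set.Iio i, M0i j)
    (hNF : ∀ i, K.NF κ (Ai i) (M0i i) N) :
    K.NF κ (⋃ i, Ai i) (⋃ i, M0i i) N := by
  constructor
  · exact K.unionChain M0i hMmono N fun i => (hNF i).1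
  · intro a ha hacard N' hN' hN'card
    have hbd : ∃ j : κ.ord.ToType, ∀ x : a, (x : C) ∈ Ai j := by
      have hchoice : ∀ x : a, ∃ i, (x : C) ∈ Ai i := by
        intro x
        have := ha x.2
        simpa using this
      choose g hg using hchoice
      obtain ⟨j, hj⟩ := bounded_of_small hreg hacard g
      exact ⟨j, fun x => hAmono _ _ (hj x) (hg x)⟩
    obtain ⟨j, hj⟩ := hbd
    obtain ⟨f, hf1, hf2, hf3⟩ :=
      (hNF j).2 a (fun x hx => hj ⟨x, hx⟩) hacard N' hN' hN'card
    exact ⟨f, hf1, hf2, fun x hx => Set.mem_iUnion.mpr ⟨j, hf3 x hx⟩⟩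

end AEC
end
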